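/- Let R(t) = A(c)·t + B(c) be the remainder of t^b(t−1)^a upon division by F(t) = t² − ((2a+2b)c + 2b)/(a+2b)·t + c in K[t], viewed as polynomials in t with coefficients rational functions of c, where K is a field with char(K) = 0 or char(K) > max{2, a+b}, a, b ∈ ℤ_{≥0}, a + b > 0, a + 2b ≠ 0. Then A(c) is not the zero function; specifically, at c = 0, F(t) = t(t − 2b/(a+2b)) does not divide t^b(t−1)^a − μ for any μ ∈ K. -/

import Mathlib

open Polynomial

private theorem key2' {K : Type*} [Field K] (a b : ℕ) (hab : 0 < a + b)
    (hcast : ∀ n : ℕ, 0 < n → n ≤ max 2 (a + b) → (n : K) ≠ 0)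
    (hK : ((a : K) + 2 * (b : K)) ≠ 0) :
    ∀ μ : K,
      ¬ ((X ^ 2 - C ((2 * (b : K)) / ((a : K) + 2 * (b : K))) * X : K[X]) ∣
          (X ^ b * (X - 1) ^ a - C μ)) := by
  rintro μ ⟨q, hq⟩
  have h2 : (2 : K) ≠ 0 := by
    have := hcast 2 (by norm_num) (le_max_left _ _); simpa using this
  by_cases hb : b = 0
  · subst hb
    have ha : 0 < a := by omega
    have haK : (a : K) ≠ 0 := hcast a ha (le_max_of_le_right (by omega))
    simp only [Nat.cast_zero, mul_zero, zero_div, map_zero, zero_mul, sub_zero, pow_zero,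
      one_mul] at hq
    have hder := congrArg (fun p => Polynomial.eval 0 (Polynomial.derivative p)) hq
    simp only [derivative_sub, derivative_pow, derivative_sub, derivative_X, derivative_one,
      derivative_C, sub_zero, derivative_mul, eval_mul, eval_add, eval_sub, eval_pow, eval_X,
      eval_C, eval_natCast, eval_one, mul_one] at hder
    norm_num at hder
    exact haK hder
  · have hbpos : 0 < b := Nat.pos_of_ne_zero hb
    have hbK : (b : K) ≠ 0 := hcast b hbpos (le_max_of_le_right (by omega))
    set r : K := 2 * (b : K) / ((a : K) + 2 * (b : K)) with hr
    have hr0 : r ≠ 0 := div_ne_zero (mul_ne_zero h2 hbK) hK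
    have hev0 := congrArg (Polynomial.eval 0) hq
    simp [zero_pow hb, zero_pow (by norm_num : (2:ℕ) ≠ 0)] at hev0
    have hevr := congrArg (Polynomial.eval r) hq
    simp only [eval_mul, eval_sub, eval_pow, eval_X, eval_C, eval_one] at hevr
    rw [show r ^ 2 - r * r = 0 by ring, zero_mul] at hevr
    rw [hev0, sub_zero] at hevr
    rcases mul_eq_zero.mp hevr with h | h
    · exact hr0 (pow_eq_zero_iff hb |>.mp h)
    · by_cases ha : a = 0
      · rw [ha, pow_zero] at h; exact one_ne_zero h
      · have hr1 : r = 1 := sub_eq_zero.mp (pow_eq_zero_iff ha |>.mp h)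
        have : (a : K) = 0 := by
          rw [hr, div_eq_one_iff_eq hK] at hr1
          linear_combination -hr1
        exact hcast a (Nat.pos_of_ne_zero ha) (le_max_of_le_right (by omega)) this


/-- Work over the field `K(c) = RatFunc K` of rational functions in the
variable `c`, with `K` a field of characteristic `0` or `> max 2 (a+b)`, and `a, b ∈ ℕ`
with `a + b > 0` and `a + 2b ≠ 0` in `K`.  Let
`F(t) = t² - ((2a+2b)c + 2b)/(a+2b)·t + c ∈ K(c)[t]` and write
`t^b (t-1)^a = Q(t)F(t) + A(c)t + B(c)` (division with remainder by the monic quadratic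
`F`).  Then `A(c)` is not the zero rational function; specifically, at `c = 0` the
quadratic `F(t) = t² - (2b/(a+2b))t = t(t - 2b/(a+2b))` does not divide
`t^b(t-1)^a - μ` for any `μ ∈ K`. -/
theorem stmt_17 {K : Type*} [Field K] (a b : ℕ) (hab : 0 < a + b)
    (hchar : ∀ p : ℕ, CharP K p → p = 0 ∨ max 2 (a + b) < p)
    (hK : ((a : K) + 2 * (b : K)) ≠ 0) :
    (((X ^ b * (X - 1) ^ a : (RatFunc K)[X]) %ₘ
        (X ^ 2 - C (((2 * (a : RatFunc K) + 2 * (b : RatFunc K)) * RatFunc.X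
              + 2 * (b : RatFunc K)) / ((a : RatFunc K) + 2 * (b : RatFunc K))) * X
          + C (RatFunc.X))).coeff 1 ≠ 0) ∧
    ∀ μ : K,
      ¬ ((X ^ 2 - C ((2 * (b : K)) / ((a : K) + 2 * (b : K))) * X : K[X]) ∣
          (X ^ b * (X - 1) ^ a - C μ)) := by
  have hcast : ∀ n : ℕ, 0 < n → n ≤ max 2 (a + b) → (n : K) ≠ 0 := by
    intro n hn hle h
    have hd := (CharP.cast_eq_zero_iff K (ringChar K) n).mp h
    rcases hchar (ringChar K) (ringChar.charP K) with hp | hp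
    · rw [hp] at hd; simp at hd; omega
    · have := Nat.le_of_dvd hn hd; omega
  refine ⟨?_, key2' a b hab hcast hK⟩
  -- Part 1
  set ι := algebraMap K[X] (RatFunc K) with hι
  set ε := Polynomial.evalRingHom (0 : K) with hε
  set F : (K[X])[X] :=
    X ^ 2
      - C ((Polynomial.C (2*(a:K)+2*(b:K)) * Polynomial.X + Polynomial.C (2*(b:K)))
            * Polynomial.C (((a:K)+2*(b:K))⁻¹)) * X
      + C Polynomial.X with hFdef
  set g : (K[X])[X] := X ^ b * (X - 1) ^ a with hgdef
  have hF : F.Monic := by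
    rw [hFdef]
    monicity!
  -- map under ι
  have h1 : RatFunc.C ((a:K) + 2*(b:K)) = (a : RatFunc K) + 2*(b : RatFunc K) := by
    simp [map_ofNat]
  have hcoeff : ι ((Polynomial.C (2*(a:K)+2*(b:K)) * Polynomial.X + Polynomial.C (2*(b:K)))
        * Polynomial.C (((a:K)+2*(b:K))⁻¹))
      = ((2 * (a : RatFunc K) + 2 * (b : RatFunc K)) * RatFunc.X
          + 2 * (b : RatFunc K)) / ((a : RatFunc K) + 2 * (b : RatFunc K)) := by
    rw [hι, div_eq_mul_inv, map_mul, map_add, map_mul, RatFunc.algebraMap_C, RatFunc.algebraMap_C,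
      RatFunc.algebraMap_C, RatFunc.algebraMap_X, map_inv₀, h1]
    simp only [map_add, map_mul, map_natCast, map_ofNat]
  have hmapF : F.map ι = X ^ 2 - C (((2 * (a : RatFunc K) + 2 * (b : RatFunc K)) * RatFunc.X
              + 2 * (b : RatFunc K)) / ((a : RatFunc K) + 2 * (b : RatFunc K))) * X
          + C (RatFunc.X) := by
    rw [hFdef]
    simp only [Polynomial.map_add, Polynomial.map_sub, Polynomial.map_mul, Polynomial.map_pow,
      Polynomial.map_X, Polynomial.map_C, hcoeff]
    rw [hι, RatFunc.algebraMap_X]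
  have hmapg : g.map ι = X ^ b * (X - 1) ^ a := by
    rw [hgdef]
    simp only [Polynomial.map_mul, Polynomial.map_pow, Polynomial.map_sub, Polynomial.map_X,
      Polynomial.map_one]
  rw [← hmapF, ← hmapg, ← Polynomial.map_modByMonic ι hF]
  rw [Polynomial.coeff_map]
  intro hzero
  have hc1 : (g %ₘ F).coeff 1 = 0 :=
    RatFunc.algebraMap_injective K (by rw [map_zero]; exact hzero)
  -- now reduce mod c = 0
  have hmapεF : F.map ε = X ^ 2 - C ((2 * (b : K)) / ((a : K) + 2 * (b : K))) * X := by
    rw [hFdef]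
    simp only [Polynomial.map_add, Polynomial.map_sub, Polynomial.map_mul, Polynomial.map_pow,
      Polynomial.map_X, Polynomial.map_C, hε, coe_evalRingHom, eval_mul, eval_add, eval_C,
      eval_X, mul_zero, zero_add, map_zero, add_zero]
    rw [div_eq_mul_inv]
  have hmapεg : g.map ε = (X ^ b * (X - 1) ^ a : K[X]) := by
    rw [hgdef]
    simp only [Polynomial.map_mul, Polynomial.map_pow, Polynomial.map_sub, Polynomial.map_X,
      Polynomial.map_one]
  have hmod : (g.map ε) %ₘ (F.map ε) = (g %ₘ F).map ε := (Polynomial.map_modByMonic ε hF).symm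
  set r0 : K[X] := (g %ₘ F).map ε with hr0def
  have hdegF : (F.map ε).degree = 2 := by
    rw [hmapεF]
    compute_degree!
  have hdeg : r0.degree < 2 := by
    rw [hr0def, Polynomial.map_modByMonic ε hF, ← hdegF]
    exact degree_modByMonic_lt _ (hF.map ε)
  have hc1' : r0.coeff 1 = 0 := by
    rw [hr0def, Polynomial.coeff_map, hc1, map_zero]
  have hr0C : r0 = C (r0.coeff 0) := by
    by_cases h0 : r0 = 0
    · rw [h0]; simp [h0]
    · have hnd : r0.natDegree ≤ 1 := by
        have h2' : r0.natDegree < 2 :=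
          (Polynomial.natDegree_lt_iff_degree_lt h0).mpr (by exact_mod_cast hdeg)
        omega
      conv_lhs => rw [Polynomial.eq_X_add_C_of_natDegree_le_one hnd]
      rw [hc1', map_zero, zero_mul, zero_add]
  have hdvd : (X ^ 2 - C ((2 * (b : K)) / ((a : K) + 2 * (b : K))) * X : K[X]) ∣
      (X ^ b * (X - 1) ^ a - C (r0.coeff 0)) := by
    rw [← hmapεF, ← hmapεg]
    refine ⟨(g.map ε) /ₘ (F.map ε), ?_⟩
    have hx := Polynomial.modByMonic_add_div (g.map ε) (F.map ε)
    rw [hmod] at hx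
    rw [← hr0C]
    linear_combination -hx
  exact key2' a b hab hcast hK (r0.coeff 0) hdvd
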